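/- Let G be a finite group, N a normal subgroup of G, and k ∈ ℕ. Then d_k(G) ≤ d_{d_k(N)+1}(G/N). -/

import Mathlib

/-- `S` is a product-one sequence over `G`: some ordering of its terms multiplies to `1`. -/
def IsProductOne {G : Type*} [Group G] (S : Multiset G) : Prop :=
  ∃ l : List G, (l : Multiset G) = S ∧ l.prod = 1

/-- The set of products `π(S)` of all orderings of the terms of `S`. -/
def piSet {G : Type*} [Group G] (S : Multiset G) : Set G :=
  {g | ∃ l : List G, (l : Multiset G) = S ∧ l.prod = g}

/-- The set `Π(S)` of products of nontrivial subsequences of `S`. -/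
def subseqProds {G : Type*} [Group G] (S : Multiset G) : Set G :=
  {g | ∃ T : Multiset G, T ≤ S ∧ T ≠ 0 ∧ g ∈ piSet T}

/-- `S` is product-one free. -/
def ProductOneFree {G : Type*} [Group G] (S : Multiset G) : Prop :=
  (1 : G) ∉ subseqProds S

/-- `S` is an atom of the monoid `B(G)` of product-one sequences: it is a nontrivial
product-one sequence that is not the concatenation of two nontrivial product-one sequences. -/
def IsPOAtom {G : Type*} [Group G] (S : Multiset G) : Prop :=
  IsProductOne S ∧ S ≠ 0 ∧
    ∀ T₁ T₂ : Multiset G, IsProductOne T₁ → IsProductOne T₂ → T₁ + T₂ = S →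
      T₁ = 0 ∨ T₂ = 0

/-- The large Davenport constant `D(G)`: the supremum of lengths of atoms of `B(G)`. -/
noncomputable def largeD (G : Type*) [Group G] : ℕ :=
  sSup {n : ℕ | ∃ S : Multiset G, IsPOAtom S ∧ Multiset.card S = n}

/-- The small Davenport constant `d(G)`: the supremum of lengths of product-one free
sequences over `G`. -/
noncomputable def smalld (G : Type*) [Group G] : ℕ :=
  sSup {n : ℕ | ∃ S : Multiset G, ProductOneFree S ∧ Multiset.card S = n}
/-- `S` is divisible in `F(G)` by a concatenation of `k` nontrivial product-one sequences. -/
def DividesKProducts {G : Type*} [Group G] (k : ℕ) (S : Multiset G) : Prop :=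
  ∃ f : Fin k → Multiset G,
    (∀ i, f i ≠ 0 ∧ IsProductOne (f i)) ∧ (∑ i, f i) ≤ S

/-- The small `k`-th Davenport constant `d_k(G)`. -/
noncomputable def smalldk (G : Type*) [Group G] (k : ℕ) : ℕ :=
  sSup {n : ℕ | ∃ S : Multiset G, ¬ DividesKProducts k S ∧ Multiset.card S = n}

/-- Every factorization of `S` into nontrivial product-one sequences has at most `k` factors. -/
def MaxFactLe {G : Type*} [Group G] (k : ℕ) (S : Multiset G) : Prop :=
  ∀ (m : ℕ) (f : Fin m → Multiset G),
    (∀ i, f i ≠ 0 ∧ IsProductOne (f i)) → (∑ i, f i) = S → m ≤ k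

/-- The large `k`-th Davenport constant `D_k(G)`. -/
noncomputable def largeDk (G : Type*) [Group G] (k : ℕ) : ℕ :=
  sSup {n : ℕ | ∃ S : Multiset G, IsProductOne S ∧ MaxFactLe k S ∧ Multiset.card S = n}


section AuxLemmas

variable {α β : Type*}

/-- Lift a `≤ map` to a sub-multiset. -/
lemma my_exists_le_of_le_map (φ : α → β) :
    ∀ (T : Multiset β) (S : Multiset α), T ≤ S.map φ → ∃ U, U ≤ S ∧ U.map φ = T := by
  classical
  intro T
  induction T using Multiset.induction with
  | empty => intro S _; exact ⟨0, zero_le, rfl⟩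
  | cons b T ih =>
    intro S hle
    have hb : b ∈ S.map φ := Multiset.mem_of_le hle (Multiset.mem_cons_self _ _)
    obtain ⟨a, haS, rfl⟩ := Multiset.mem_map.mp hb
    have hT : T ≤ (S.erase a).map φ := by
      have h1 : φ a ::ₘ T ≤ φ a ::ₘ (S.erase a).map φ := by
        rw [← Multiset.map_cons, Multiset.cons_erase haS]; exact hle
      exact (Multiset.cons_le_cons_iff _).mp h1
    obtain ⟨U, hU, hUm⟩ := ih (S.erase a) hT
    refine ⟨a ::ₘ U, ?_, by rw [Multiset.map_cons, hUm]⟩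
    calc a ::ₘ U ≤ a ::ₘ S.erase a := Multiset.cons_le_cons _ hU
    _ = S := Multiset.cons_erase haS

lemma my_split_map [DecidableEq α] (φ : α → β) (U : Multiset α) (A B : Multiset β)
    (h : U.map φ = A + B) :
    ∃ U₁ U₂, U₁ + U₂ = U ∧ U₁.map φ = A ∧ U₂.map φ = B := by
  have hA : A ≤ U.map φ := h ▸ Multiset.le_add_right A B
  obtain ⟨U₁, hU₁, hU₁m⟩ := my_exists_le_of_le_map φ A U hA
  have h2 : U₁ + (U - U₁) = U := add_tsub_cancel_of_le hU₁
  refine ⟨U₁, U - U₁, h2, hU₁m, ?_⟩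
  rw [← h2, Multiset.map_add, hU₁m] at h
  exact add_left_cancel h

lemma my_lift_sum (φ : α → β) :
    ∀ (m : ℕ) (U : Multiset α) (f : Fin m → Multiset β), U.map φ = ∑ i, f i →
      ∃ g : Fin m → Multiset α, (∑ i, g i) = U ∧ ∀ i, (g i).map φ = f i := by
  intro m
  induction m with
  | zero =>
    intro U f h
    simp only [Finset.univ_eq_empty, Finset.sum_empty, Multiset.map_eq_zero] at h
    exact ⟨fun _ => 0, by simp [h.symm], fun i => i.elim0⟩
  | succ m ih =>
    classical
    intro U f h
    rw [Fin.sum_univ_succ] at h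
    obtain ⟨U₁, U₂, hsum, h1, h2⟩ := my_split_map φ U (f 0) (∑ i : Fin m, f i.succ) h
    obtain ⟨g, hgsum, hgm⟩ := ih U₂ (fun i => f i.succ) h2
    refine ⟨Fin.cons U₁ g, ?_, ?_⟩
    · rw [Fin.sum_univ_succ]; simpa [hgsum] using hsum
    · intro i
      refine Fin.cases ?_ ?_ i
      · simpa using h1
      · intro j; simpa using hgm j

/-- Lift a list ordering along `map`. -/
lemma my_lift_list (φ : α → β) :
    ∀ (l : List β) (T : Multiset α), T.map φ = (l : Multiset β) →
      ∃ L : List α, (L : Multiset α) = T ∧ L.map φ = l := by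
  classical
  intro l
  induction l with
  | nil =>
    intro T h
    have : T = 0 := by
      simpa [Multiset.map_eq_zero] using h
    exact ⟨[], by simp [this], by simp⟩
  | cons b l ih =>
    intro T h
    have hb : b ∈ T.map φ := by rw [h]; simp
    obtain ⟨a, haT, rfl⟩ := Multiset.mem_map.mp hb
    have h2 : (T.erase a).map φ = (l : Multiset β) := by
      have hc : φ a ::ₘ (T.erase a).map φ = φ a ::ₘ (l : Multiset β) := by
        rw [← Multiset.map_cons, Multiset.cons_erase haT, h]
        rfl
      exact (Multiset.cons_inj_right _).mp hc
    obtain ⟨L, hL, hLm⟩ := ih (T.erase a) h2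
    refine ⟨a :: L, ?_, by simp [hLm]⟩
    rw [← Multiset.cons_coe, hL, Multiset.cons_erase haT]

lemma my_coe_flatten : ∀ ll : List (List α),
    ((ll.flatten : List α) : Multiset α) = (ll.map Multiset.ofList).sum := by
  intro ll
  induction ll with
  | nil => simp
  | cons a ll ih =>
    rw [List.flatten_cons, ← Multiset.coe_add, List.map_cons, List.sum_cons, ih]

lemma my_key_slice {H : Type*} [Group H] (l : List H) (a b : ℕ) (hab : a < b)
    (hb : b ≤ l.length) (heq : (l.take a).prod = (l.take b).prod) :
    ∃ T : Multiset H, T ≤ (l : Multiset H) ∧ T ≠ 0 ∧ IsProductOne T ∧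
      Multiset.card T = b - a := by
  set mid := (l.drop a).take (b - a) with hmid
  have htake : l.take b = l.take a ++ mid := by
    rw [hmid, ← List.take_add]
    congr 1
    omega
  have hprodmid : mid.prod = 1 := by
    have : (l.take a).prod = (l.take a).prod * mid.prod := by
      rw [← List.prod_append, ← htake, heq]
    exact (left_eq_mul.mp this)
  have hlenmid : mid.length = b - a := by
    rw [hmid, List.length_take, List.length_drop]
    omega
  refine ⟨(mid : Multiset H), ?_, ?_, ⟨mid, rfl, hprodmid⟩, by simp [hlenmid]⟩
  · exact ((List.take_sublist _ _).trans (List.drop_sublist _ _)).subperm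
  · simp only [ne_eq, Multiset.coe_eq_zero]
    intro h
    rw [h] at hlenmid
    simp at hlenmid
    omega

lemma my_exists_small_po {H : Type*} [Group H] [Finite H] (S : Multiset H)
    (hS : Nat.card H ≤ Multiset.card S) :
    ∃ T, T ≤ S ∧ T ≠ 0 ∧ IsProductOne T ∧ Multiset.card T ≤ Nat.card H := by
  cases nonempty_fintype H
  set c := Nat.card H with hc
  have hcf : c = Fintype.card H := Nat.card_eq_fintype_card
  obtain ⟨l, hl⟩ : ∃ l : List H, (l : Multiset H) = S := ⟨S.toList, S.coe_toList⟩
  have hlen : c ≤ l.length := by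
    rw [← Multiset.coe_card, hl]; exact hS
  obtain ⟨i, j, hij, heq⟩ := Fintype.exists_ne_map_eq_of_card_lt
    (fun i : Fin (c + 1) => (l.take (i : ℕ)).prod)
    (by simp [← hcf])
  have main : ∀ a b : Fin (c + 1), a < b → (l.take (a : ℕ)).prod = (l.take (b : ℕ)).prod →
      ∃ T, T ≤ S ∧ T ≠ 0 ∧ IsProductOne T ∧ Multiset.card T ≤ c := by
    intro a b hab habeq
    have hb : (b : ℕ) ≤ l.length := le_trans (by omega) hlen
    obtain ⟨T, hT1, hT2, hT3, hT4⟩ := my_key_slice l a b hab hb habeq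
    exact ⟨T, hl ▸ hT1, hT2, hT3, by omega⟩
  rcases hij.lt_or_gt with hlt | hlt
  · exact main i j hlt heq
  · exact main j i hlt heq.symm

lemma my_divides_of_card {H : Type*} [Group H] [Finite H] :
    ∀ (m : ℕ) (S : Multiset H), m * Nat.card H ≤ Multiset.card S →
      DividesKProducts m S := by
  intro m
  induction m with
  | zero => exact fun S _ => ⟨fun i => i.elim0, fun i => i.elim0, by simp⟩
  | succ m ih =>
    classical
    intro S hcard
    have hc1 : 1 ≤ Nat.card H := Nat.one_le_iff_ne_zero.mpr Nat.card_pos.ne'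
    obtain ⟨T, hTS, hT0, hTpo, hTc⟩ := my_exists_small_po S (by nlinarith)
    obtain ⟨f, hf, hfle⟩ := ih (S - T) (by
      have h1 : Multiset.card (S - T) = Multiset.card S - Multiset.card T := by
        rw [Multiset.card_sub hTS]
      have h2 : Multiset.card T ≤ Multiset.card S := Multiset.card_le_card hTS
      rw [Nat.succ_mul] at hcard
      omega)
    refine ⟨Fin.cons T f, ?_, ?_⟩
    · intro i
      refine Fin.cases ⟨hT0, hTpo⟩ (fun j => by simpa using hf j) i
    · rw [Fin.sum_univ_succ]
      simp only [Fin.cons_zero, Fin.cons_succ]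
      calc T + ∑ i : Fin m, f i ≤ T + (S - T) := add_le_add_right hfle T
        _ = S := add_tsub_cancel_of_le hTS

lemma my_bdd_smalldk {H : Type*} [Group H] [Finite H] (m : ℕ) :
    BddAbove {n : ℕ | ∃ S : Multiset H, ¬ DividesKProducts m S ∧ Multiset.card S = n} := by
  refine ⟨m * Nat.card H, ?_⟩
  rintro n ⟨S, hS, rfl⟩
  by_contra hcon
  push_neg at hcon
  exact hS (my_divides_of_card m S hcon.le)

lemma my_le_smalldk {H : Type*} [Group H] [Finite H] (m : ℕ) (S : Multiset H)
    (h : ¬ DividesKProducts m S) : Multiset.card S ≤ smalldk H m :=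
  le_csSup (my_bdd_smalldk m) ⟨S, h, rfl⟩

end AuxLemmas

/-- For a normal subgroup `N` of a finite group `G` and `k ≥ 1`,
`d_k(G) ≤ d_{d_k(N)+1}(G/N)`. -/
theorem stmt10 {G : Type*} [Group G] [Finite G] (N : Subgroup G) [N.Normal]
    (k : ℕ) (hk : 1 ≤ k) :
    smalldk G k ≤ smalldk (G ⧸ N) (smalldk ↥N k + 1) := by
  classical
  set φ : G →* G ⧸ N := QuotientGroup.mk' N with hφ
  set m := smalldk ↥N k + 1 with hm
  have hne : {n : ℕ | ∃ S : Multiset G, ¬ DividesKProducts k S ∧ Multiset.card S = n}.Nonempty := by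
    refine ⟨0, 0, ?_, by simp⟩
    rintro ⟨f, hf, hle⟩
    have h0 : f ⟨0, hk⟩ ≤ ∑ i, f i :=
      Finset.single_le_sum (fun i _ => zero_le) (Finset.mem_univ _)
    exact (hf _).1 (Multiset.le_zero.mp (h0.trans hle))
  refine csSup_le hne ?_
  rintro n ⟨S, hS, rfl⟩
  have hdiv : ¬ DividesKProducts m (S.map φ) := by
    rintro ⟨f, hf, hle⟩
    apply hS
    obtain ⟨U, hUS, hUm⟩ := my_exists_le_of_le_map φ (∑ i, f i) S hle
    obtain ⟨g, hgsum, hgm⟩ := my_lift_sum φ m U f hUm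
    have hlift : ∀ i : Fin m, ∃ L : List G, (L : Multiset G) = g i ∧ (L.map φ).prod = 1 := by
      intro i
      obtain ⟨lb, hlb, hlbp⟩ := (hf i).2
      obtain ⟨L, hL, hLm⟩ := my_lift_list φ lb (g i) (by rw [hgm i, ← hlb])
      exact ⟨L, hL, by rw [hLm, hlbp]⟩
    choose L hL hLp using hlift
    have hmem : ∀ i, (L i).prod ∈ N := by
      intro i
      refine (QuotientGroup.eq_one_iff _).mp ?_
      have := map_list_prod φ (L i)
      rw [hLp i] at this
      exact this
    set ν : Fin m → ↥N := fun i => ⟨(L i).prod, hmem i⟩ with hν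
    set W : Multiset ↥N := Multiset.map ν Finset.univ.val with hW
    have hWcard : Multiset.card W = m := by simp [hW, hm]
    have hWdiv : DividesKProducts k W := by
      by_contra hcon
      have := my_le_smalldk k W hcon
      rw [hWcard, hm] at this
      omega
    obtain ⟨h, hh, hhle⟩ := hWdiv
    obtain ⟨V, hVuniv, hVm⟩ := my_exists_le_of_le_map ν (∑ j, h j) Finset.univ.val hhle
    obtain ⟨Vs, hVsum, hVsm⟩ := my_lift_sum ν k V h hVm
    refine ⟨fun j => ((Vs j).map g).sum, ?_, ?_⟩
    · intro j
      show ((Vs j).map g).sum ≠ 0 ∧ IsProductOne ((Vs j).map g).sum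
      obtain ⟨w, hw, hwp⟩ := (hh j).2
      obtain ⟨v, hv, hvm⟩ := my_lift_list ν w (Vs j) (by rw [hVsm j, ← hw])
      constructor
      · -- nonzero
        have hVs0 : Vs j ≠ 0 := by
          intro h0
          apply (hh j).1
          rw [← hVsm j, h0]
          simp
        obtain ⟨i, hi⟩ := Multiset.exists_mem_of_ne_zero hVs0
        have hgi : g i ∈ (Vs j).map g := Multiset.mem_map_of_mem g hi
        have hle2 : g i ≤ ((Vs j).map g).sum := by
          rw [← Multiset.cons_erase hgi, Multiset.sum_cons]
          exact Multiset.le_add_right _ _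
        intro h0
        rw [h0] at hle2
        have hgz : g i = 0 := Multiset.le_zero.mp hle2
        apply (hf i).1
        rw [← hgm i, hgz]
        simp
      · -- product one
        refine ⟨(v.map L).flatten, ?_, ?_⟩
        · rw [my_coe_flatten, List.map_map]
          have hcomp : Multiset.ofList ∘ L = g := funext hL
          rw [hcomp, ← Multiset.sum_coe, ← Multiset.map_coe, hv]
        · rw [List.prod_flatten, List.map_map]
          have hcomp : List.prod ∘ L = (fun i => ((ν i : G))) := by
            funext i
            rfl
          rw [hcomp]
          have : List.map (fun i => ((ν i : G))) v = List.map (N.subtype) (List.map ν v) := by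
            rw [List.map_map]
            rfl
          rw [this, hvm, ← map_list_prod N.subtype w, hwp]
          rfl
    · -- sum ≤ S
      show ∑ j, ((Vs j).map g).sum ≤ S
      have hmono : ∀ {s t : Multiset (Multiset G)}, s ≤ t → s.sum ≤ t.sum := by
        intro s t hst
        obtain ⟨u, rfl⟩ := Multiset.le_iff_exists_add.mp hst
        rw [Multiset.sum_add]
        exact Multiset.le_add_right _ _
      have hF : ∀ A : Finset (Fin k), ∑ j ∈ A, ((Vs j).map g).sum
          = ((∑ j ∈ A, Vs j).map g).sum := by
        intro A
        rw [← Multiset.coe_sumAddMonoidHom, ← Multiset.coe_mapAddMonoidHom g,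
          ← AddMonoidHom.comp_apply, map_sum]
        rfl
      calc ∑ j, ((Vs j).map g).sum = ((∑ j, Vs j).map g).sum := hF Finset.univ
        _ = (V.map g).sum := by rw [hVsum]
        _ ≤ ((Finset.univ.val).map g).sum := hmono (Multiset.map_le_map hVuniv)
        _ = ∑ i, g i := (Finset.sum_eq_multiset_sum _ _).symm
        _ = U := hgsum
        _ ≤ S := hUS
  have := my_le_smalldk m (S.map φ) hdiv
  simpa using this
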